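/- Let X be a Banach space of M-cotype p (2 ≤ p ≤ ∞) with dual exponent p′, and let (x_n) be a sequence in X that is weakly (P,p′)-convergent to 0 for some weight matrix P. Then Σ_{n=1}^∞ ‖x_n‖^{-p′} = ∞. -/

import Mathlib

open Filter Topology

/-- `X` has M-cotype `p` (for `2 ≤ p ≤ ∞`): there is `C > 0` such that for every
finite collection of vectors there is a choice of signs with
`‖∑ γ k • y k‖ ≥ C * (∑ ‖y k‖ ^ p) ^ (1/p)` (the right-hand `ℓ_p` expression
being encoded via the `PiLp p` norm, which also covers `p = ∞`). -/
def HasMCotype (p : ENNReal) (X : Type*) [NormedAddCommGroup X]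
    [NormedSpace ℝ X] : Prop :=
  ∃ C : ℝ, 0 < C ∧ ∀ (n : ℕ) (y : Fin n → X), ∃ γ : Fin n → ℝ,
    (∀ k, γ k = 1 ∨ γ k = -1) ∧
    C * ‖(WithLp.equiv p (Fin n → ℝ)).symm (fun k => ‖y k‖)‖ ≤ ‖∑ k, γ k • y k‖

theorem stmt12 {X : Type*} [NormedAddCommGroup X] [NormedSpace ℝ X] [CompleteSpace X]
    (p : ENNReal) (hp : 2 ≤ p) (p' : ℝ)
    (hconj : 1 / p.toReal + 1 / p' = 1)
    (hcot : HasMCotype p X)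
    (x : ℕ → X) (hx0 : ∀ n, x n ≠ 0)
    (P : ℕ → ℕ → ℝ)
    (hP0 : ∀ n m, 0 ≤ P n m)
    (hPfin : ∀ n, (Function.support (P n)).Finite)
    (hPsum : ∀ n, ∑' m, P n m = 1)
    (hPcol : ∀ m, Tendsto (fun n => P n m) atTop (𝓝 0))
    (hconv : ∀ f : X →L[ℝ] ℝ,
      Tendsto (fun n => ∑' m, P n m * |f (x m)| ^ p') atTop (𝓝 0)) :
    ¬ Summable (fun n => ‖x n‖ ^ (-p')) := by
  intro hsum
  classical
  -- basic exponent facts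
  have hxnorm : ∀ m, (0:ℝ) < ‖x m‖ := fun m => norm_pos_iff.mpr (hx0 m)
  have hinv2 : 1 / p.toReal ≤ 1 / 2 := by
    by_cases hpt : p = ⊤
    · simp [hpt]
    · have h2r : 2 ≤ p.toReal := by
        have := ENNReal.toReal_mono hpt hp
        simpa using this
      exact one_div_le_one_div_of_le (by norm_num) h2r
  have hinv0 : 0 ≤ 1 / p.toReal := by positivity
  have h2 : (1:ℝ)/2 ≤ 1 / p' := by linarith
  have hp'pos : 0 < p' := one_div_pos.mp (lt_of_lt_of_le (by norm_num) h2)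
  have hp'1 : 1 ≤ p' := (div_le_one hp'pos).mp (by linarith)
  -- the finite supports
  set Fn : ℕ → Finset ℕ := fun n => (hPfin n).toFinset with hFndef
  have hFn : ∀ n m, m ∉ Fn n → P n m = 0 := by
    intro n m hm
    by_contra h
    exact hm ((hPfin n).mem_toFinset.mpr h)
  have hsumrow : ∀ n, ∑ m ∈ Fn n, P n m = 1 := by
    intro n
    rw [← hPsum n]
    exact (tsum_eq_sum (hFn n)).symm
  -- the signed vectors
  set v : ℕ × (ℕ → Bool) → X := fun i =>
    ∑ m ∈ Fn i.1, (if i.2 m then (1:ℝ) else -1) • P i.1 m • x m with hvdef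
  -- Banach–Steinhaus: the signed sums are uniformly bounded
  obtain ⟨C', hC'⟩ : ∃ C', ∀ i : ℕ × (ℕ → Bool),
      ‖(NormedSpace.inclusionInDoubleDual ℝ X) (v i)‖ ≤ C' := by
    apply banach_steinhaus
    intro f
    obtain ⟨B, hB⟩ : ∃ B, ∀ n, (∑' m, P n m * |f (x m)| ^ p') ≤ B := by
      obtain ⟨B, hB⟩ := (hconv f).bddAbove_range
      exact ⟨B, fun n => hB ⟨n, rfl⟩⟩
    refine ⟨1 + B, ?_⟩
    rintro ⟨n, s⟩
    have key : ∀ t : ℝ, 0 ≤ t → t ≤ 1 + t ^ p' := by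
      intro t ht
      rcases le_total t 1 with h | h
      · have : (0:ℝ) ≤ t ^ p' := Real.rpow_nonneg ht _
        linarith
      · have : t ^ (1:ℝ) ≤ t ^ p' := Real.rpow_le_rpow_of_exponent_le h hp'1
        rw [Real.rpow_one] at this
        linarith
    have hfv : (NormedSpace.inclusionInDoubleDual ℝ X) (v (n, s)) f = f (v (n, s)) := rfl
    rw [hfv]
    have h1 : f (v (n, s)) = ∑ m ∈ Fn n, (if s m then (1:ℝ) else -1) * (P n m * f (x m)) := by
      rw [hvdef, map_sum]
      refine Finset.sum_congr rfl fun m _ => ?_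
      by_cases hs : s m <;> simp [hs, map_smul, smul_eq_mul]
    have h2' : ‖f (v (n, s))‖ ≤ ∑ m ∈ Fn n, P n m * |f (x m)| := by
      rw [h1, Real.norm_eq_abs]
      refine (Finset.abs_sum_le_sum_abs _ _).trans (le_of_eq ?_)
      refine Finset.sum_congr rfl fun m _ => ?_
      by_cases hs : s m <;> simp [hs, abs_mul, abs_of_nonneg (hP0 n m)]
    refine h2'.trans ?_
    have h3 : ∑ m ∈ Fn n, P n m * |f (x m)| ≤
        ∑ m ∈ Fn n, P n m * (1 + |f (x m)| ^ p') :=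
      Finset.sum_le_sum fun m _ =>
        mul_le_mul_of_nonneg_left (key _ (abs_nonneg _)) (hP0 n m)
    refine h3.trans ?_
    have h4 : ∑ m ∈ Fn n, P n m * (1 + |f (x m)| ^ p')
        = (∑ m ∈ Fn n, P n m) + ∑ m ∈ Fn n, P n m * |f (x m)| ^ p' := by
      rw [← Finset.sum_add_distrib]
      exact Finset.sum_congr rfl fun m _ => by ring
    rw [h4, hsumrow n]
    have h5 : ∑ m ∈ Fn n, P n m * |f (x m)| ^ p' = ∑' m, P n m * |f (x m)| ^ p' := by
      refine (tsum_eq_sum ?_).symm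
      intro b hb
      rw [hFn n b hb, zero_mul]
    rw [h5]
    linarith [hB n]
  have hC'0 : 0 ≤ C' := le_trans (ContinuousLinearMap.opNorm_nonneg _) (hC' (0, fun _ => true))
  have hvC : ∀ i, ‖v i‖ ≤ C' := by
    intro i
    refine NormedSpace.norm_le_dual_bound ℝ (v i) hC'0 fun f => ?_
    calc ‖f (v i)‖ = ‖(NormedSpace.inclusionInDoubleDual ℝ X) (v i) f‖ := rfl
      _ ≤ ‖(NormedSpace.inclusionInDoubleDual ℝ X) (v i)‖ * ‖f‖ :=
        ContinuousLinearMap.le_opNorm _ _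
      _ ≤ C' * ‖f‖ := mul_le_mul_of_nonneg_right (hC' i) (norm_nonneg f)
  -- cotype
  obtain ⟨Cc, hCc0, hCcot⟩ := hcot
  set C₂ : ℝ := C' / Cc + 1 with hC₂def
  have hC₂0 : 0 < C₂ := by positivity
  -- key norm bound from cotype + Banach–Steinhaus
  have hvecbound : ∀ n,
      ‖(WithLp.equiv p (Fin (Fn n).card → ℝ)).symm
        (fun j => ‖P n (((Fn n).equivFin.symm j) : ℕ) • x (((Fn n).equivFin.symm j) : ℕ)‖)‖
        ≤ C₂ := by
    intro n
    set e := (Fn n).equivFin with hedef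
    set y : Fin (Fn n).card → X := fun j => P n (e.symm j : ℕ) • x (e.symm j : ℕ) with hydef
    obtain ⟨γ, hγsign, hγ⟩ := hCcot (Fn n).card y
    set sg : ℕ → Bool := fun m =>
      if h : m ∈ Fn n then decide (γ (e ⟨m, h⟩) = 1) else true with hsgdef
    have hsum_eq : ∑ j, γ j • y j = v (n, sg) := by
      rw [hvdef]
      calc ∑ j, γ j • y j
          = ∑ a : {m // m ∈ Fn n}, γ (e a) • y (e a) := (Equiv.sum_comp e _).symm
        _ = ∑ a : {m // m ∈ Fn n},
              (if sg (a : ℕ) then (1:ℝ) else -1) • P n (a : ℕ) • x (a : ℕ) := by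
            refine Finset.sum_congr rfl fun a _ => ?_
            have hy : y (e a) = P n (a : ℕ) • x (a : ℕ) := by
              rw [hydef]; simp
            have hsg : sg (a : ℕ) = decide (γ (e a) = 1) := by
              rw [hsgdef]
              simp only [a.2, dif_pos]
            rw [hy, hsg]
            rcases hγsign (e a) with h | h
            · rw [h]; simp
            · rw [h, show (decide ((-1:ℝ) = 1)) = false from decide_eq_false (by norm_num)]
              simp
        _ = ∑ m ∈ Fn n, (if sg m then (1:ℝ) else -1) • P n m • x m :=
            Finset.sum_coe_sort (Fn n) (fun m => (if sg m then (1:ℝ) else -1) • P n m • x m)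
    have hCcle : Cc * ‖(WithLp.equiv p (Fin (Fn n).card → ℝ)).symm (fun j => ‖y j‖)‖ ≤ C' := by
      refine hγ.trans ?_
      rw [hsum_eq]
      exact hvC (n, sg)
    have hle : ‖(WithLp.equiv p (Fin (Fn n).card → ℝ)).symm (fun j => ‖y j‖)‖ ≤ C' / Cc := by
      rw [le_div_iff₀ hCc0]
      linarith
    exact hle.trans (by rw [hC₂def]; linarith)
  -- the key Hölder-type estimate
  have hK : ∀ n (G : Finset ℕ), G ⊆ Fn n →
      (∑ m ∈ G, P n m) ≤ C₂ * (∑ m ∈ G, ‖x m‖ ^ (-p')) ^ (1/p') := by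
    rcases eq_or_ne p ⊤ with hptop | hptop
    · -- p = ∞, p' = 1
      subst hptop
      have hp'e : p' = 1 := by
        rw [ENNReal.toReal_top] at hconj
        norm_num at hconj
        nlinarith [hconj, hp'pos]
      have hterm : ∀ n m, m ∈ Fn n → P n m * ‖x m‖ ≤ C₂ := by
        intro n m hm
        have hb := hvecbound n
        rw [PiLp.norm_eq_ciSup] at hb
        simp only [WithLp.equiv_symm_apply, PiLp.toLp_apply, norm_norm] at hb
        have hle : ‖P n (((Fn n).equivFin.symm ((Fn n).equivFin ⟨m, hm⟩)) : ℕ) •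
            x (((Fn n).equivFin.symm ((Fn n).equivFin ⟨m, hm⟩)) : ℕ)‖ ≤
            ⨆ j, ‖P n (((Fn n).equivFin.symm j) : ℕ) • x (((Fn n).equivFin.symm j) : ℕ)‖ :=
          le_ciSup (f := fun j => ‖P n (((Fn n).equivFin.symm j) : ℕ) •
              x (((Fn n).equivFin.symm j) : ℕ)‖)
            (Set.Finite.bddAbove (Set.finite_range _)) ((Fn n).equivFin ⟨m, hm⟩)
        rw [Equiv.symm_apply_apply] at hle
        have : ‖P n m • x m‖ ≤ C₂ := le_trans hle hb
        rwa [norm_smul, Real.norm_eq_abs, abs_of_nonneg (hP0 n m)] at this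
      intro n G hG
      have h1 : ∀ m ∈ G, P n m ≤ C₂ * ‖x m‖⁻¹ := by
        intro m hm
        have hxm := hxnorm m
        have heq : P n m = (P n m * ‖x m‖) * ‖x m‖⁻¹ := by field_simp
        rw [heq]
        exact mul_le_mul_of_nonneg_right (hterm n m (hG hm)) (inv_nonneg.mpr (norm_nonneg _))
      calc ∑ m ∈ G, P n m ≤ ∑ m ∈ G, C₂ * ‖x m‖⁻¹ := Finset.sum_le_sum h1
        _ = C₂ * ∑ m ∈ G, ‖x m‖⁻¹ := by rw [Finset.mul_sum]
        _ = C₂ * (∑ m ∈ G, ‖x m‖ ^ (-p')) ^ (1/p') := by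
            rw [hp'e, show (1:ℝ)/(1:ℝ) = 1 by norm_num, Real.rpow_one]
            congr 1
            exact Finset.sum_congr rfl fun m _ => (Real.rpow_neg_one _).symm
    · -- p finite
      have hr2 : 2 ≤ p.toReal := by
        have := ENNReal.toReal_mono hptop hp
        simpa using this
      have hrpos : 0 < p.toReal := by linarith
      have hpq : Real.HolderConjugate p.toReal p' :=
        Real.holderConjugate_iff.mpr ⟨by linarith, by simpa [one_div] using hconj⟩
      have hsumbound : ∀ n,
          (∑ m ∈ Fn n, (P n m * ‖x m‖) ^ p.toReal) ^ (1/p.toReal) ≤ C₂ := by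
        intro n
        have hb := hvecbound n
        rw [PiLp.norm_eq_sum hrpos] at hb
        simp only [WithLp.equiv_symm_apply, PiLp.toLp_apply, norm_norm] at hb
        have hre : ∑ j, ‖P n (((Fn n).equivFin.symm j) : ℕ) •
              x (((Fn n).equivFin.symm j) : ℕ)‖ ^ p.toReal
            = ∑ m ∈ Fn n, (P n m * ‖x m‖) ^ p.toReal := by
          calc ∑ j, ‖P n (((Fn n).equivFin.symm j) : ℕ) •
                x (((Fn n).equivFin.symm j) : ℕ)‖ ^ p.toReal
              = ∑ a : {m // m ∈ Fn n}, ‖P n (a : ℕ) • x (a : ℕ)‖ ^ p.toReal := by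
                rw [← Equiv.sum_comp (Fn n).equivFin
                  (fun j => ‖P n (((Fn n).equivFin.symm j) : ℕ) •
                    x (((Fn n).equivFin.symm j) : ℕ)‖ ^ p.toReal)]
                exact Finset.sum_congr rfl fun a _ => by simp
            _ = ∑ m ∈ Fn n, ‖P n m • x m‖ ^ p.toReal :=
                Finset.sum_coe_sort (Fn n) (fun m => ‖P n m • x m‖ ^ p.toReal)
            _ = ∑ m ∈ Fn n, (P n m * ‖x m‖) ^ p.toReal := by
                refine Finset.sum_congr rfl fun m _ => ?_
                rw [norm_smul, Real.norm_eq_abs, abs_of_nonneg (hP0 n m)]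
        rwa [hre] at hb
      intro n G hG
      have heq : ∑ m ∈ G, P n m = ∑ m ∈ G, (P n m * ‖x m‖) * ‖x m‖⁻¹ := by
        refine Finset.sum_congr rfl fun m _ => ?_
        have := hxnorm m
        field_simp
      rw [heq]
      have hH := Real.inner_le_Lp_mul_Lq_of_nonneg G hpq
        (f := fun m => P n m * ‖x m‖) (g := fun m => ‖x m‖⁻¹)
        (fun m _ => mul_nonneg (hP0 n m) (norm_nonneg _))
        (fun m _ => inv_nonneg.mpr (norm_nonneg _))
      refine hH.trans ?_
      have hfac1 : (∑ m ∈ G, (P n m * ‖x m‖) ^ p.toReal) ^ (1/p.toReal) ≤ C₂ := by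
        refine le_trans (Real.rpow_le_rpow
          (Finset.sum_nonneg fun m _ =>
            Real.rpow_nonneg (mul_nonneg (hP0 n m) (norm_nonneg _)) _)
          (Finset.sum_le_sum_of_subset_of_nonneg hG fun m _ _ =>
            Real.rpow_nonneg (mul_nonneg (hP0 n m) (norm_nonneg _)) _)
          hinv0) (hsumbound n)
      have hfac2 : (∑ m ∈ G, (‖x m‖⁻¹) ^ p') = ∑ m ∈ G, ‖x m‖ ^ (-p') := by
        refine Finset.sum_congr rfl fun m _ => ?_
        rw [Real.inv_rpow (norm_nonneg _), ← Real.rpow_neg (norm_nonneg _)]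
      rw [hfac2]
      exact mul_le_mul_of_nonneg_right hfac1
        (Real.rpow_nonneg (Finset.sum_nonneg fun m _ =>
          Real.rpow_nonneg (norm_nonneg _) _) _)
  -- final contradiction
  set ε : ℝ := ((2*C₂)⁻¹) ^ p' with hεdef
  have hbase : (0:ℝ) < (2*C₂)⁻¹ := by positivity
  have hε : 0 < ε := Real.rpow_pos_of_pos hbase _
  obtain ⟨s, hs⟩ := hsum.vanishing (Iio_mem_nhds hε)
  have hcol : Tendsto (fun n => ∑ m ∈ s, P n m) atTop (𝓝 0) := by
    have := tendsto_finset_sum s (fun m (_ : m ∈ s) => hPcol m)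
    simpa using this
  have hev : ∀ᶠ n in atTop, ∑ m ∈ s, P n m < 1/2 :=
    hcol.eventually (gt_mem_nhds (by norm_num : (0:ℝ) < 1/2))
  obtain ⟨n, hn⟩ := hev.exists
  have h1 : (1:ℝ) = ∑ m ∈ Fn n ∩ s, P n m + ∑ m ∈ Fn n \ s, P n m := by
    rw [Finset.sum_inter_add_sum_sdiff]
    exact (hsumrow n).symm
  have hA : ∑ m ∈ Fn n ∩ s, P n m ≤ ∑ m ∈ s, P n m :=
    Finset.sum_le_sum_of_subset_of_nonneg Finset.inter_subset_right (fun m _ _ => hP0 n m)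
  have hBd : ∑ m ∈ Fn n \ s, P n m ≤ C₂ * (∑ m ∈ Fn n \ s, ‖x m‖ ^ (-p')) ^ (1/p') :=
    hK n _ Finset.sdiff_subset
  have htail : ∑ m ∈ Fn n \ s, ‖x m‖ ^ (-p') < ε := hs _ Finset.sdiff_disjoint
  have htail' : (∑ m ∈ Fn n \ s, ‖x m‖ ^ (-p')) ^ (1/p') ≤ ε ^ (1/p') :=
    Real.rpow_le_rpow (Finset.sum_nonneg fun m _ =>
      Real.rpow_nonneg (norm_nonneg _) _) htail.le (by positivity)
  have hεe : ε ^ (1/p') = (2*C₂)⁻¹ := by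
    rw [hεdef, ← Real.rpow_mul hbase.le, mul_one_div, div_self (ne_of_gt hp'pos),
      Real.rpow_one]
  have hfinal : C₂ * (∑ m ∈ Fn n \ s, ‖x m‖ ^ (-p')) ^ (1/p') ≤ 1/2 := by
    calc C₂ * (∑ m ∈ Fn n \ s, ‖x m‖ ^ (-p')) ^ (1/p')
        ≤ C₂ * ((2*C₂)⁻¹) := mul_le_mul_of_nonneg_left (htail'.trans_eq hεe) hC₂0.le
      _ = 1/2 := by field_simp
  linarith
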